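/- Let γ > 1 and let α satisfy α > 0 or α < −γ. Fix v ∈ ℝ, densities ρ₋, ρ₊ > 0 with ρ₋ ≠ ρ₊, a pressure p₊ > 0, and set p₋ = p₊ · (ρ₋/ρ₊)^{α/(α+γ−1)}. If F = (Fρ, Fρv, Fρe) ∈ ℝ³ is entropy conservative for Harten's entropy with parameter α at the pair of states (ρ₋, v, p₋), (ρ₊, v, p₊), i.e. ⟦w⟧·F − ⟦ψ⟧ = 0, then Fρ = −((γ−1)/α) · (⟦ρ (p/ρ^γ)^{1/(α+γ)}⟧ / ⟦(p/ρ^γ)^{1/(α+γ)}⟧) · v, where the jumps in numerator and denominator are evaluated at the two given states and the denominator is nonzero. -/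

import Mathlib

/-- First component of the entropy variables for Harten's entropy with
parameter `α` for the 1D compressible Euler equations (`γ` is the ratio of
specific heats). -/
noncomputable def hartenW1 (γ α ρ v p : ℝ) : ℝ :=
  ρ / p * (p / ρ ^ γ) ^ (1 / (α + γ)) * (-(α / (γ - 1)) * (p / ρ) - v ^ 2 / 2)

/-- Second component of the entropy variables for Harten's entropy. -/
noncomputable def hartenW2 (γ α ρ v p : ℝ) : ℝ :=
  ρ / p * (p / ρ ^ γ) ^ (1 / (α + γ)) * v

/-- Third component of the entropy variables for Harten's entropy. -/
noncomputable def hartenW3 (γ α ρ v p : ℝ) : ℝ :=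
  ρ / p * (p / ρ ^ γ) ^ (1 / (α + γ)) * (-1)

/-- Flux potential associated with Harten's entropy. -/
noncomputable def hartenPsi (γ α ρ v p : ℝ) : ℝ :=
  ρ * (p / ρ ^ γ) ^ (1 / (α + γ)) * v

/-- Entropy conservation residual `⟦w⟧ ⬝ F - ⟦ψ⟧` of a numerical flux
`(Fρ, Fρv, Fρe)` at the pair of states `(ρm, vm, pm)`, `(ρp, vp, pp)`. -/
noncomputable def ecResidual (γ α ρm vm pm ρp vp pp Fρ Fρv Fρe : ℝ) : ℝ :=
  (hartenW1 γ α ρp vp pp - hartenW1 γ α ρm vm pm) * Fρ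
    + (hartenW2 γ α ρp vp pp - hartenW2 γ α ρm vm pm) * Fρv
    + (hartenW3 γ α ρp vp pp - hartenW3 γ α ρm vm pm) * Fρe
    - (hartenPsi γ α ρp vp pp - hartenPsi γ α ρm vm pm)

/-- For constant velocity and pressures related by
`p₋ = p₊ (ρ₋/ρ₊)^(α/(α+γ-1))`, an entropy-conservative numerical flux for
Harten's entropy with parameter `α` has density flux
`Fρ = -((γ-1)/α) ⟦ρ (p/ρ^γ)^(1/(α+γ))⟧ / ⟦(p/ρ^γ)^(1/(α+γ))⟧ ⋅ v`,
the denominator being nonzero. -/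
theorem density_flux_special_pressure_jump_form
    (γ α v ρm ρp pp pm Fρ Fρv Fρe : ℝ)
    (hγ : 1 < γ) (hα : 0 < α ∨ α < -γ)
    (hρm : 0 < ρm) (hρp : 0 < ρp) (hρ : ρm ≠ ρp) (hpp : 0 < pp)
    (hpm : pm = pp * (ρm / ρp) ^ (α / (α + γ - 1)))
    (hec : ecResidual γ α ρm v pm ρp v pp Fρ Fρv Fρe = 0) :
    (pp / ρp ^ γ) ^ (1 / (α + γ)) - (pm / ρm ^ γ) ^ (1 / (α + γ)) ≠ 0 ∧
    Fρ = -((γ - 1) / α) *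
      ((ρp * (pp / ρp ^ γ) ^ (1 / (α + γ)) - ρm * (pm / ρm ^ γ) ^ (1 / (α + γ))) /
        ((pp / ρp ^ γ) ^ (1 / (α + γ)) - (pm / ρm ^ γ) ^ (1 / (α + γ)))) * v := by
  have hγ1 : γ - 1 ≠ 0 := sub_ne_zero.2 (ne_of_gt hγ)
  have hα0 : α ≠ 0 := by rcases hα with h | h; · exact ne_of_gt h
                         · nlinarith
  have hA : α + γ ≠ 0 := by rcases hα with h | h <;> nlinarith
  have hB : α + γ - 1 ≠ 0 := by rcases hα with h | h <;> nlinarith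
  set r := ρm / ρp with hr_def
  have hr : 0 < r := div_pos hρm hρp
  have hr1 : r ≠ 1 := by rw [hr_def, Ne, div_eq_one_iff_eq hρp.ne']; exact hρ
  have hpm' : 0 < pm := by rw [hpm]; positivity
  have hρmr : ρm = ρp * r := by rw [hr_def]; field_simp
  have hργp : (0:ℝ) < ρp ^ γ := Real.rpow_pos_of_pos hρp γ
  have hργm : (0:ℝ) < ρm ^ γ := Real.rpow_pos_of_pos hρm γ
  have hrγ : ρm ^ γ = ρp ^ γ * r ^ γ := by
    rw [hρmr, Real.mul_rpow hρp.le hr.le]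
  have key1 : pm / ρm ^ γ = pp / ρp ^ γ * r ^ (α / (α + γ - 1) - γ) := by
    rw [hpm, hrγ, Real.rpow_sub hr]
    field_simp
  set sm := (pm / ρm ^ γ) ^ (1 / (α + γ)) with hsm_def
  set sp := (pp / ρp ^ γ) ^ (1 / (α + γ)) with hsp_def
  have hsp : 0 < sp := Real.rpow_pos_of_pos (div_pos hpp hργp) _
  have hsm : 0 < sm := Real.rpow_pos_of_pos (div_pos hpm' hργm) _
  have hexp : (α / (α + γ - 1) - γ) * (1 / (α + γ)) = (1 - γ) / (α + γ - 1) := by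
    field_simp
    ring
  have key2 : sm = sp * r ^ ((1 - γ) / (α + γ - 1)) := by
    rw [hsm_def, key1, Real.mul_rpow (by positivity) (by positivity),
      ← Real.rpow_mul hr.le, hexp, hsp_def]
  have key3 : ρm / pm * sm = ρp / pp * sp := by
    have hre : r ^ (α / (α + γ - 1)) = r ^ (1:ℝ) * r ^ ((1 - γ) / (α + γ - 1)) := by
      rw [← Real.rpow_add hr]
      congr 1
      field_simp
      ring
    rw [key2, hρmr, hpm, hre, Real.rpow_one]
    have hrpow : (0:ℝ) < r ^ ((1 - γ) / (α + γ - 1)) := Real.rpow_pos_of_pos hr _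
    field_simp
  have key4 : sp - sm ≠ 0 := by
    intro h
    have hsmsp : sp * r ^ ((1 - γ) / (α + γ - 1)) = sp * 1 := by
      rw [mul_one, ← key2]; linarith
    have hone : r ^ ((1 - γ) / (α + γ - 1)) = 1 := mul_left_cancel₀ hsp.ne' hsmsp
    have hlog : ((1 - γ) / (α + γ - 1)) * Real.log r = 0 := by
      rw [← Real.log_rpow hr, hone, Real.log_one]
    have he : (1 - γ) / (α + γ - 1) ≠ 0 := div_ne_zero (by linarith) hB
    have hlr : Real.log r = 0 := by
      rcases mul_eq_zero.1 hlog with h1 | h1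
      · exact absurd h1 he
      · exact h1
    rcases Real.log_eq_zero.1 hlr with h1 | h1 | h1 <;> [linarith; exact hr1 h1; linarith]
  refine ⟨key4, ?_⟩
  simp only [ecResidual, hartenW1, hartenW2, hartenW3, hartenPsi, ← hsm_def, ← hsp_def] at hec
  have hs1 : ρp / pp * sp * (pp / ρp) = sp := by field_simp
  have hs2 : ρm / pm * sm * (pm / ρm) = sm := by field_simp
  have key5 : (-(α / (γ - 1)) * (sp - sm)) * Fρ = (ρp * sp - ρm * sm) * v := by
    linear_combination hec + (α/(γ-1)) * Fρ * hs1 - (α/(γ-1)) * Fρ * hs2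
      - (v^2/2 * Fρ - v * Fρv + Fρe) * key3
  have hcoef : -(α / (γ - 1)) * (sp - sm) ≠ 0 :=
    mul_ne_zero (neg_ne_zero.2 (div_ne_zero hα0 hγ1)) key4
  have h6 : Fρ = ((ρp * sp - ρm * sm) * v) / (-(α / (γ - 1)) * (sp - sm)) := by
    rw [eq_div_iff hcoef]
    linear_combination key5
  rw [h6]
  field_simp
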